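/- arXiv:1712.05336 — 5 statements merged into one kernel-verified Lean document; each statement's English description precedes it below -/
import Mathlib

section
/- Let G be a topological group acting continuously on a topological space X with a d-open action. Then for every x ∈ X the closure of the orbit cl(G·x) is a clopen subset of X. -/
theorem stmt7 {G X : Type*} [Group G] [TopologicalSpace G] [IsTopologicalGroup G]
    [TopologicalSpace X]
    (α : G → X → X)
    (hα1 : ∀ x, α 1 x = x) (hαm : ∀ g g' x, α (g * g') x = α g (α g' x))
    (hαc : Continuous fun p : G × X => α p.1 p.2)
    (hdopen : ∀ (x : X) (U : Set G), IsOpen U → (1 : G) ∈ U →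
      x ∈ interior (closure ((fun g => α g x) '' U))) :
    ∀ x : X, IsClopen (closure (Set.range fun g : G => α g x)) := by
  intro x
  set C := closure (Set.range fun g : G => α g x) with hC
  have hmapsto : ∀ g : G, Set.MapsTo (α g) C C := by
    intro g
    have hc : Continuous (α g) :=
      hαc.comp (continuous_const.prodMk continuous_id)
    have h1 : Set.MapsTo (α g) (Set.range fun g' => α g' x)
        (Set.range fun g' => α g' x) := by
      rintro _ ⟨g', rfl⟩; exact ⟨g * g', hαm g g' x⟩
    exact h1.closure hc
  refine ⟨isClosed_closure, ?_⟩
  have hsub : C ⊆ interior C := by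
    intro y hy
    have h := hdopen y Set.univ isOpen_univ (Set.mem_univ 1)
    have hsub : closure ((fun g => α g y) '' Set.univ) ⊆ C := by
      apply closure_minimal _ isClosed_closure
      rintro _ ⟨g, _, rfl⟩
      exact hmapsto g hy
    exact interior_mono hsub h
  have : interior C = C := Set.Subset.antisymm interior_subset hsub
  rw [← this]; exact isOpen_interior
end

section
/- Let G be a topological group acting continuously, effectively and transitively on a Tychonoff space X with an equiuniformity 𝒰 of weight at most τ. Then the character of G in the topology of uniform convergence induced by 𝒰 is at most τ; consequently there exists a topological group H of character at most τ together with a continuous surjective homomorphism φ : G → H and a continuous transitive H-action γ on X with α(g,x) = γ(φ(g),x). -/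
universe u

/-- The (identity-)neighborhood character of a point is at most `τ`. -/
def charLE (H : Type*) [TopologicalSpace H] (h : H) (τ : Cardinal) : Prop :=
  ∃ b : Set (Set H), Cardinal.mk b ≤ τ ∧
    ∀ U ∈ nhds h, ∃ V ∈ b, V ∈ nhds h ∧ V ⊆ U

/-- A topological group together with a continuous action on `X`. -/
structure TopGroupActionOn (X : Type u) [TopologicalSpace X] : Type (u + 1) where
  carrier : Type u
  [group : Group carrier]
  [topology : TopologicalSpace carrier]
  topgroup : IsTopologicalGroup carrier
  act : carrier → X → X
  act_one : ∀ x, act 1 x = x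
  act_mul : ∀ g h x, act (g * h) x = act g (act h x)
  act_cont : Continuous fun p : carrier × X => act p.1 p.2

def TopGroupActionOn.CharLE {X : Type u} [TopologicalSpace X]
    (A : TopGroupActionOn X) (τ : Cardinal) : Prop :=
  letI := A.group; letI := A.topology
  charLE A.carrier 1 τ

def TopGroupActionOn.Transitive {X : Type u} [TopologicalSpace X]
    (A : TopGroupActionOn X) : Prop :=
  ∀ x y : X, ∃ g, A.act g x = y

/-- `φ` is a continuous surjective homomorphism intertwining `α` with `A.act`. -/
def TopGroupActionOn.IsEquivariantHom {X : Type u} [TopologicalSpace X]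
    (A : TopGroupActionOn X) {G : Type*} [Group G] [TopologicalSpace G]
    (α : G → X → X) (φ : G → A.carrier) : Prop :=
  letI := A.group; letI := A.topology
  Function.Surjective φ ∧ Continuous φ ∧
    (∀ a b : G, φ (a * b) = φ a * φ b) ∧ ∀ g x, α g x = A.act (φ g) x



open Filter UniformSpace Topology

/-- Basis of neighborhoods in the topology of uniform convergence pulled back to `G`. -/
theorem auxBasis {G X : Type*} [UniformSpace X] (α : G → X → X) (g0 : G) :
    (@nhds G (TopologicalSpace.induced (fun g : G => UniformFun.ofFun (α g))
        (UniformFun.topologicalSpace X X)) g0).HasBasis (· ∈ uniformity X)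
      (fun V => {h : G | ∀ x, (α g0 x, α h x) ∈ V}) := by
  rw [nhds_induced]
  exact (UniformFun.hasBasis_nhds X X (UniformFun.ofFun (α g0))).comap
    (fun g : G => UniformFun.ofFun (α g))

theorem auxTopGroup {G X : Type*} [Group G] [UniformSpace X] (α : G → X → X)
    (hα1 : ∀ x, α 1 x = x) (hαm : ∀ g g' x, α (g * g') x = α g (α g' x))
    (hsat : ∀ g : G, UniformContinuous (α g)) :
    @IsTopologicalGroup G (TopologicalSpace.induced (fun g : G => UniformFun.ofFun (α g))
      (UniformFun.topologicalSpace X X)) _ := by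
  letI : TopologicalSpace G := TopologicalSpace.induced
    (fun g : G => UniformFun.ofFun (α g)) (UniformFun.topologicalSpace X X)
  have hb : ∀ g0 : G, (nhds g0).HasBasis (· ∈ uniformity X)
      (fun V => {h : G | ∀ x, (α g0 x, α h x) ∈ V}) := auxBasis α
  have hinv1 : ∀ (g : G) (x), α g (α g⁻¹ x) = x := fun g x => by
    rw [← hαm, mul_inv_cancel, hα1]
  have hinv2 : ∀ (g : G) (x), α g⁻¹ (α g x) = x := fun g x => by
    rw [← hαm, inv_mul_cancel, hα1]
  refine { continuous_mul := ?_, continuous_inv := ?_ }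
  ·
    rw [continuous_iff_continuousAt]
    rintro ⟨g0, h0⟩
    unfold ContinuousAt
    rw [nhds_prod_eq, (hb (g0 * h0)).tendsto_right_iff]
    intro V hV
    obtain ⟨W, hW, hWV⟩ := comp_mem_uniformity_sets hV
    have hg0W : (fun p : X × X => (α g0 p.1, α g0 p.2)) ⁻¹' W ∈ uniformity X := hsat g0 hW
    filter_upwards [Filter.prod_mem_prod ((hb g0).mem_of_mem hW)
      ((hb h0).mem_of_mem hg0W)] with p hp x
    obtain ⟨hg, hh⟩ := hp
    have h1 : (α g0 (α h0 x), α g0 (α p.2 x)) ∈ W := hh x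
    have h2 : (α g0 (α p.2 x), α p.1 (α p.2 x)) ∈ W := hg _
    have h3 := hWV (SetRel.prodMk_mem_comp h1 h2)
    rw [hαm, hαm]
    exact h3
  ·
    rw [continuous_iff_continuousAt]
    intro g0
    unfold ContinuousAt
    rw [(hb g0⁻¹).tendsto_right_iff]
    intro V hV
    have hV' : (fun p : X × X => (α g0⁻¹ p.1, α g0⁻¹ p.2)) ⁻¹' V ∈ uniformity X :=
      hsat g0⁻¹ hV
    have hW : SetRel.symmetrize ((fun p : X × X => (α g0⁻¹ p.1, α g0⁻¹ p.2)) ⁻¹' V) ∈ uniformity X :=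
      symmetrize_mem_uniformity hV'
    filter_upwards [(hb g0).mem_of_mem hW] with g hg x
    have h1 : (α g0⁻¹ (α g (α g⁻¹ x)), α g0⁻¹ (α g0 (α g⁻¹ x))) ∈ V := (hg (α g⁻¹ x)).2
    simpa only [hinv1, hinv2] using h1

theorem auxActCont {G X : Type*} [UniformSpace X] (α : G → X → X)
    (hsat : ∀ g : G, UniformContinuous (α g)) :
    @Continuous (G × X) X
      (@instTopologicalSpaceProd G X (TopologicalSpace.induced
        (fun g : G => UniformFun.ofFun (α g)) (UniformFun.topologicalSpace X X)) _) _
      (fun p : G × X => α p.1 p.2) := by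
  letI : TopologicalSpace G := TopologicalSpace.induced
    (fun g : G => UniformFun.ofFun (α g)) (UniformFun.topologicalSpace X X)
  have hb : ∀ g0 : G, (nhds g0).HasBasis (· ∈ uniformity X)
      (fun V => {h : G | ∀ x, (α g0 x, α h x) ∈ V}) := auxBasis α
  rw [continuous_iff_continuousAt]
  rintro ⟨g0, x0⟩
  unfold ContinuousAt
  rw [nhds_prod_eq, (nhds_basis_uniformity' (Filter.basis_sets (uniformity X))).tendsto_right_iff]
  intro V hV
  obtain ⟨W, hW, hWV⟩ := comp_mem_uniformity_sets hV
  have hW' : (fun p : X × X => (α g0 p.1, α g0 p.2)) ⁻¹' W ∈ uniformity X := hsat g0 hW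
  filter_upwards [Filter.prod_mem_prod ((hb g0).mem_of_mem hW)
    (UniformSpace.ball_mem_nhds x0 hW')] with p hp
  obtain ⟨hg, hx⟩ := hp
  have h1 : (α g0 x0, α g0 p.2) ∈ W := hx
  have h2 : (α g0 p.2, α p.1 p.2) ∈ W := hg _
  exact hWV (SetRel.prodMk_mem_comp h1 h2)

/-- The neighborhood base at `1` of cardinality at most `τ`. -/
theorem auxChar {G X : Type u} [Group G] [UniformSpace X] (τ : Cardinal) (α : G → X → X)
    (hα1 : ∀ x, α 1 x = x)
    (hweight : ∃ b : Set (Set (X × X)), Cardinal.mk b ≤ τ ∧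
      b ⊆ (uniformity X).sets ∧ ∀ U ∈ uniformity X, ∃ V ∈ b, V ⊆ U) :
    @charLE G (TopologicalSpace.induced (fun g : G => UniformFun.ofFun (α g))
      (UniformFun.topologicalSpace X X)) 1 τ := by
  letI : TopologicalSpace G := TopologicalSpace.induced
    (fun g : G => UniformFun.ofFun (α g)) (UniformFun.topologicalSpace X X)
  have hb := auxBasis α (1 : G)
  obtain ⟨b, hbcard, hbsub, hbbase⟩ := hweight
  refine ⟨(fun V => {h : G | ∀ x, (α 1 x, α h x) ∈ V}) '' b, ?_, ?_⟩
  · exact le_trans Cardinal.mk_image_le hbcard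
  · intro U hU
    obtain ⟨V, hV, hVU⟩ := hb.mem_iff.mp hU
    obtain ⟨W, hWb, hWV⟩ := hbbase V hV
    refine ⟨_, Set.mem_image_of_mem _ hWb, hb.mem_of_mem (hbsub hWb), ?_⟩
    exact subset_trans (fun h hh x => hWV (hh x)) hVU

theorem stmt14aux {G : Type u} {X : Type u} [Group G] [TopologicalSpace G]
    [IsTopologicalGroup G] [UniformSpace X] [T2Space X] (τ : Cardinal)
    (α : G → X → X)
    (hα1 : ∀ x, α 1 x = x) (hαm : ∀ g g' x, α (g * g') x = α g (α g' x))
    (hαc : Continuous fun p : G × X => α p.1 p.2)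
    (heff : ∀ g : G, (∀ x, α g x = x) → g = 1)
    (htrans : ∀ x y : X, ∃ g : G, α g x = y)
    (hsat : ∀ g : G, UniformContinuous (α g))
    (hbdd : ∀ U ∈ uniformity X, ∃ O ∈ nhds (1 : G), ∃ V ∈ uniformity X,
      ∀ x y : X, (x, y) ∈ V → ∀ o ∈ O, (x, α o y) ∈ U)
    (hweight : ∃ b : Set (Set (X × X)), Cardinal.mk b ≤ τ ∧
      b ⊆ (uniformity X).sets ∧ ∀ U ∈ uniformity X, ∃ V ∈ b, V ⊆ U) :
    @charLE G
        (TopologicalSpace.induced (fun g : G => UniformFun.ofFun (α g))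
          (UniformFun.topologicalSpace X X)) 1 τ ∧
      ∃ A : TopGroupActionOn X, A.CharLE τ ∧ A.Transitive ∧
        ∃ φ : G → A.carrier, A.IsEquivariantHom α φ := by
  have hchar := auxChar (G := G) τ α hα1 hweight
  refine ⟨hchar, ?_⟩
  have hb : ∀ g0 : G, (@nhds G (TopologicalSpace.induced
        (fun g : G => UniformFun.ofFun (α g)) (UniformFun.topologicalSpace X X)) g0).HasBasis
      (· ∈ uniformity X) (fun V => {h : G | ∀ x, (α g0 x, α h x) ∈ V}) := auxBasis α
  have hcont : @Continuous G G _ (TopologicalSpace.induced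
      (fun g : G => UniformFun.ofFun (α g)) (UniformFun.topologicalSpace X X)) id := by
    rw [@continuous_iff_continuousAt G G _ (TopologicalSpace.induced
      (fun g : G => UniformFun.ofFun (α g)) (UniformFun.topologicalSpace X X))]
    intro g0
    show Filter.Tendsto id (nhds g0) (@nhds G (TopologicalSpace.induced
      (fun g : G => UniformFun.ofFun (α g)) (UniformFun.topologicalSpace X X)) g0)
    rw [(hb g0).tendsto_right_iff]
    intro V hV
    obtain ⟨O, hO, V', hV', hprop⟩ := hbdd V hV
    have hO' : ∀ o ∈ O, ∀ x, (x, α o x) ∈ V := fun o ho x =>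
      hprop x x (refl_mem_uniformity hV') o ho
    have htend : Filter.Tendsto (fun g : G => g * g0⁻¹) (nhds g0) (nhds (1 : G)) := by
      have h := (continuous_mul_right (g0⁻¹ : G)).tendsto g0
      simpa using h
    filter_upwards [htend hO] with g hg x
    have hgx : α g x = α (g * g0⁻¹) (α g0 x) := by rw [← hαm, inv_mul_cancel_right]
    show (α g0 x, α (id g) x) ∈ V
    rw [id, hgx]
    exact hO' _ hg _
  refine ⟨{ carrier := G, group := inferInstance,
            topology := TopologicalSpace.induced
              (fun g : G => UniformFun.ofFun (α g)) (UniformFun.topologicalSpace X X),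
            topgroup := auxTopGroup α hα1 hαm hsat,
            act := α, act_one := hα1, act_mul := hαm,
            act_cont := auxActCont α hsat }, ?_, ?_, ?_⟩
  · exact hchar
  · exact htrans
  · exact ⟨id, Function.surjective_id, hcont, fun a b => rfl, fun g x => rfl⟩

theorem stmt14 {G : Type u} {X : Type u} [Group G] [TopologicalSpace G]
    [IsTopologicalGroup G] [UniformSpace X] [T2Space X] (τ : Cardinal)
    (α : G → X → X)
    (hα1 : ∀ x, α 1 x = x) (hαm : ∀ g g' x, α (g * g') x = α g (α g' x))
    (hαc : Continuous fun p : G × X => α p.1 p.2)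
    (heff : ∀ g : G, (∀ x, α g x = x) → g = 1)
    (htrans : ∀ x y : X, ∃ g : G, α g x = y)
    (hsat : ∀ g : G, UniformContinuous (α g))
    (hbdd : ∀ U ∈ uniformity X, ∃ O ∈ nhds (1 : G), ∃ V ∈ uniformity X,
      ∀ x y : X, (x, y) ∈ V → ∀ o ∈ O, (x, α o y) ∈ U)
    (hweight : ∃ b : Set (Set (X × X)), Cardinal.mk b ≤ τ ∧
      b ⊆ (uniformity X).sets ∧ ∀ U ∈ uniformity X, ∃ V ∈ b, V ⊆ U) :
    @charLE G
        (TopologicalSpace.induced (fun g : G => UniformFun.ofFun (α g))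
          (UniformFun.topologicalSpace X X)) 1 τ ∧
      ∃ A : TopGroupActionOn X, A.CharLE τ ∧ A.Transitive ∧
        ∃ φ : G → A.carrier, A.IsEquivariantHom α φ := by
  exact stmt14aux τ α hα1 hαm hαc heff htrans hsat hbdd hweight
end

section
/- Let X be a Tychonoff space admitting a uniformity 𝒰 of weight at most τ compatible with its topology. Then there is no topological group G of pseudocharacter greater than τ acting continuously and effectively on X in such a way that 𝒰 is an equiuniformity for the action. -/
universe u

theorem stmt15 {G X : Type u} [Group G] [TopologicalSpace G] [IsTopologicalGroup G]
    [UniformSpace X] [T2Space X] (τ : Cardinal.{u})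
    (hweight : ∃ b : Set (Set (X × X)), Cardinal.mk b ≤ τ ∧
      b ⊆ (uniformity X).sets ∧ ∀ U ∈ uniformity X, ∃ V ∈ b, V ⊆ U)
    (α : G → X → X)
    (hα1 : ∀ x, α 1 x = x) (hαm : ∀ g g' x, α (g * g') x = α g (α g' x))
    (hαc : Continuous fun p : G × X => α p.1 p.2)
    (heff : ∀ g : G, (∀ x, α g x = x) → g = 1)
    (hsat : ∀ g : G, UniformContinuous (α g))
    (hbdd : ∀ U ∈ uniformity X, ∃ O ∈ nhds (1 : G), ∃ V ∈ uniformity X,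
      ∀ x y : X, (x, y) ∈ V → ∀ o ∈ O, (x, α o y) ∈ U) :
    ∃ 𝒪 : Set (Set G), Cardinal.mk 𝒪 ≤ τ ∧ (∀ U ∈ 𝒪, IsOpen U) ∧
      ⋂₀ 𝒪 = {(1 : G)} := by
  obtain ⟨b, hb_card, hb_sub, hb_basis⟩ := hweight
  -- for each U ∈ b choose O via hbdd
  choose O hO hprop using fun (U : b) => hbdd U (hb_sub U.2)
  refine ⟨(fun U : b => interior (O U)) '' Set.univ, ?_, ?_, ?_⟩
  · calc Cardinal.mk ((fun U : b => interior (O U)) '' Set.univ)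
        ≤ Cardinal.mk b := Cardinal.mk_le_mk_of_subset (Set.image_subset_range _ _)
          |>.trans Cardinal.mk_range_le
      _ ≤ τ := hb_card
  · rintro W ⟨U, -, rfl⟩
    exact isOpen_interior
  · ext g
    simp only [Set.mem_sInter, Set.mem_image, Set.mem_univ, true_and, Set.mem_singleton_iff]
    constructor
    · intro hg
      apply heff
      intro x
      symm
      apply eq_of_uniformity (x := x) (y := α g x)
      intro W hW
      obtain ⟨V, hVb, hVW⟩ := hb_basis W hW
      obtain ⟨V', hV', hV'prop⟩ := hprop ⟨V, hVb⟩
      have hgO : g ∈ O ⟨V, hVb⟩ :=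
        interior_subset (by exact hg _ ⟨⟨V, hVb⟩, rfl⟩)
      exact hVW (hV'prop x x (refl_mem_uniformity hV') g hgO)
    · rintro rfl W ⟨U, rfl⟩
      exact mem_interior_iff_mem_nhds.2 (hO U)
end

section
/- Let G be an ω-narrow topological group acting continuously and transitively on a topological space X of countable character. Then X is separable and has countable cellularity. -/
theorem stmt16 {G X : Type*} [Group G] [TopologicalSpace G] [IsTopologicalGroup G]
    [TopologicalSpace X] [FirstCountableTopology X]
    (hnarrow : ∀ U ∈ nhds (1 : G), ∃ A : Set G, A.Countable ∧
      ∀ g : G, ∃ a ∈ A, ∃ u ∈ U, g = a * u)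
    (α : G → X → X)
    (hα1 : ∀ x, α 1 x = x) (hαm : ∀ g g' x, α (g * g') x = α g (α g' x))
    (hαc : Continuous fun p : G × X => α p.1 p.2)
    (htrans : ∀ x y : X, ∃ g : G, α g x = y) :
    TopologicalSpace.SeparableSpace X ∧
      ∀ 𝒞 : Set (Set X), (∀ c ∈ 𝒞, IsOpen c ∧ c.Nonempty) →
        𝒞.PairwiseDisjoint id → 𝒞.Countable := by
  suffices hsep : TopologicalSpace.SeparableSpace X by
    refine ⟨hsep, ?_⟩
    intro 𝒞 h𝒞 hdisj
    obtain ⟨D, hDc, hDd⟩ := hsep.exists_countable_dense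
    rcases 𝒞.eq_empty_or_nonempty with rfl | ⟨c₀, hc₀⟩
    · exact Set.countable_empty
    have : Nonempty X := ⟨(h𝒞 c₀ hc₀).2.some⟩
    have hpick : ∀ c ∈ 𝒞, ∃ d, d ∈ c ∩ D := by
      intro c hc
      exact hDd.inter_open_nonempty c (h𝒞 c hc).1 (h𝒞 c hc).2
    choose! f hf using hpick
    have hinj : Set.InjOn f 𝒞 := by
      intro c hc c' hc' hcc'
      by_contra hne
      have h1 := (hf c hc).1
      have h2 := (hf c' hc').1
      rw [hcc'] at h1
      exact Set.disjoint_left.mp (hdisj hc hc' hne) h1 h2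
    have hmaps : Set.MapsTo f 𝒞 D := fun c hc => (hf c hc).2
    exact hmaps.countable_of_injOn hinj hDc
  -- separability
  rcases isEmpty_or_nonempty X with hX | hX
  · exact ⟨⟨∅, Set.countable_empty, fun x => isEmptyElim x⟩⟩
  obtain ⟨x₀⟩ := hX
  obtain ⟨U, hU⟩ := (nhds x₀).exists_antitone_basis
  -- neighborhoods of 1 in G
  have hcontg : ∀ g : G, Continuous fun z : X => α g z := by
    intro g
    exact hαc.comp (continuous_const.prodMk continuous_id)
  have hcont1 : Continuous fun g : G => α g⁻¹ x₀ :=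
    (hαc.comp (continuous_id.prodMk continuous_const)).comp continuous_inv
  have hV : ∀ n : ℕ, {g : G | α g⁻¹ x₀ ∈ U n} ∈ nhds (1 : G) := by
    intro n
    have hUn : U n ∈ nhds x₀ := hU.toHasBasis.mem_of_mem trivial
    exact hcont1.continuousAt.preimage_mem_nhds
      (by simpa [hα1] using hUn)
  choose A hAc hAcov using fun n => hnarrow _ (hV n)
  refine ⟨⟨⋃ n, (fun a => α a x₀) '' A n, Set.countable_iUnion
    (fun n => (hAc n).image _), ?_⟩⟩
  rw [dense_iff_inter_open]
  intro O hO ⟨y, hy⟩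
  obtain ⟨g, hg⟩ := htrans x₀ y
  have hQ : {z : X | α g z ∈ O} ∈ nhds x₀ := by
    refine (hcontg g).continuousAt.preimage_mem_nhds ?_
    rw [hg]
    exact hO.mem_nhds hy
  obtain ⟨n, hn⟩ := hU.toHasBasis.mem_iff.mp hQ
  obtain ⟨a, ha, u, hu, hgau⟩ := hAcov n g
  refine ⟨α a x₀, ?_, Set.mem_iUnion.mpr ⟨n, ⟨a, ha, rfl⟩⟩⟩
  have : a = g * u⁻¹ := by rw [hgau]; group
  rw [this, hαm]
  exact hn.2 hu
end

section
/- Let G be a topological group whose underlying uniform space (with the two-sided uniformity) is complete and Baire (e.g., G Čech-complete), acting continuously and transitively on a Tychonoff space X, and suppose the natural extension of the action to the Raikov completion ρG of G is d-open. If X is compact with countable character, then X is metrizable. -/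
open Filter Set Topology Uniformity Pointwise

/-- In a `UniformGroup` (in mathlib's sense), every neighborhood of `1` contains an open,
symmetric, conjugation-invariant neighborhood `U` of `1` with `U * (U * U) ⊆ V`.
(mathlib's `UniformGroup` forces the group to have small invariant neighborhoods, since both
`uniformity_eq_comap_nhds_one` and `uniformity_eq_comap_inv_mul_nhds_one` hold.) -/
theorem sin_step_stmt19 {G : Type*} [Group G] [UniformSpace G] [IsUniformGroup G] {V : Set G}
    (hV : V ∈ 𝓝 (1 : G)) :
    ∃ U : Set G, IsOpen U ∧ (1 : G) ∈ U ∧ (∀ u ∈ U, u⁻¹ ∈ U) ∧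
      (∀ g : G, ∀ u ∈ U, g * u * g⁻¹ ∈ U) ∧
      (∀ a ∈ U, ∀ b ∈ U, ∀ c ∈ U, a * (b * c) ∈ V) := by
  obtain ⟨W₁, hW₁o, hW₁1, hW₁⟩ := exists_open_nhds_one_mul_subset hV
  obtain ⟨W₂, hW₂o, hW₂1, hW₂⟩ := exists_open_nhds_one_mul_subset (hW₁o.mem_nhds hW₁1)
  have htr : ∀ a ∈ W₂, ∀ b ∈ W₂, ∀ c ∈ W₂, a * (b * c) ∈ V := by
    intro a ha b hb c hc
    have h1 : b * c ∈ W₁ := hW₂ (mul_mem_mul hb hc)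
    have h2 : a ∈ W₁ := by
      have := hW₂ (mul_mem_mul ha hW₂1); rwa [mul_one] at this
    exact hW₁ (mul_mem_mul h2 h1)
  have hU : {p : G × G | p.1⁻¹ * p.2 ∈ W₂} ∈ 𝓤 G := by
    rw [uniformity_eq_comap_inv_mul_nhds_one]
    exact preimage_mem_comap (hW₂o.mem_nhds hW₂1)
  rw [uniformity_eq_comap_nhds_one] at hU
  obtain ⟨W, hW, hWsub⟩ := mem_comap.mp hU
  have key : ∀ g w : G, w ∈ W → g⁻¹ * w * g ∈ W₂ := by
    intro g w hw
    have hmem : ((g, w * g) : G × G) ∈ (fun p : G × G => p.2 / p.1) ⁻¹' W := by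
      simp only [mem_preimage, div_eq_mul_inv, mul_inv_cancel_right]; exact hw
    have := hWsub hmem
    simpa [mul_assoc] using this
  have hW₀1 : (1 : G) ∈ interior W := mem_interior_iff_mem_nhds.2 hW
  set W₀ := interior W with hW₀def
  set U₁ : Set G := ⋃ g : G, (fun h => g * h * g⁻¹) ⁻¹' W₀ with hU₁def
  have hU₁o : IsOpen U₁ :=
    isOpen_iUnion fun g => isOpen_interior.preimage
      ((continuous_const.mul continuous_id).mul continuous_const)
  have hU₁1 : (1 : G) ∈ U₁ := mem_iUnion.2 ⟨1, by simpa using hW₀1⟩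
  have hU₁sub : U₁ ⊆ W₂ := by
    intro u hu
    obtain ⟨g, hg⟩ := mem_iUnion.mp hu
    have h := key g (g * u * g⁻¹) (interior_subset hg)
    have heq : g⁻¹ * (g * u * g⁻¹) * g = u := by group
    rwa [heq] at h
  have hU₁conj : ∀ k : G, ∀ u ∈ U₁, k * u * k⁻¹ ∈ U₁ := by
    intro k u hu
    obtain ⟨g, hg⟩ := mem_iUnion.mp hu
    refine mem_iUnion.2 ⟨g * k⁻¹, ?_⟩
    show (g * k⁻¹) * (k * u * k⁻¹) * (g * k⁻¹)⁻¹ ∈ W₀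
    have heq : (g * k⁻¹) * (k * u * k⁻¹) * (g * k⁻¹)⁻¹ = g * u * g⁻¹ := by group
    rw [heq]; exact hg
  refine ⟨U₁ ∩ (fun u => u⁻¹) ⁻¹' U₁, hU₁o.inter (hU₁o.preimage continuous_inv),
    ⟨hU₁1, by simpa using hU₁1⟩, ?_, ?_, ?_⟩
  · rintro u ⟨h1, h2⟩
    exact ⟨h2, by simpa using h1⟩
  · rintro g u ⟨h1, h2⟩
    refine ⟨hU₁conj g u h1, ?_⟩
    have h3 := hU₁conj g u⁻¹ h2
    have heq : (g * u * g⁻¹)⁻¹ = g * u⁻¹ * g⁻¹ := by group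
    show (g * u * g⁻¹)⁻¹ ∈ U₁
    rw [heq]; exact h3
  · rintro a ⟨ha, -⟩ b ⟨hb, -⟩ c ⟨hc, -⟩
    exact htr a (hU₁sub ha) b (hU₁sub hb) c (hU₁sub hc)

set_option maxHeartbeats 1000000 in
theorem stmt19 {G X : Type*} [Group G] [UniformSpace G] [IsUniformGroup G]
    [CompleteSpace G] [BaireSpace G]
    [TopologicalSpace X] [CompactSpace X] [T2Space X]
    [FirstCountableTopology X]
    (α : G → X → X)
    (hα1 : ∀ x, α 1 x = x) (hαm : ∀ g g' x, α (g * g') x = α g (α g' x))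
    (hαc : Continuous fun p : G × X => α p.1 p.2)
    (htrans : ∀ x y : X, ∃ g : G, α g x = y)
    (hdopen : ∀ (x : X) (U : Set G), IsOpen U → (1 : G) ∈ U →
      x ∈ interior (closure ((fun g => α g x) '' U))) :
    TopologicalSpace.MetrizableSpace X := by
  rcases isEmpty_or_nonempty X with hX | hX
  · exact TopologicalSpace.metrizableSpace_of_t3_secondCountable X
  obtain ⟨x0⟩ := hX
  -- continuity helpers
  have hcg : ∀ g : G, Continuous fun y : X => α g y := fun g =>
    hαc.comp (continuous_const.prodMk continuous_id)
  have hcx : ∀ y : X, Continuous fun g : G => α g y := fun y =>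
    hαc.comp (continuous_id.prodMk continuous_const)
  have hid : ∀ (g : G) (y : X), α g⁻¹ (α g y) = y := fun g y => by
    rw [← hαm, inv_mul_cancel, hα1]
  have hid' : ∀ (g : G) (y : X), α g (α g⁻¹ y) = y := fun g y => by
    rw [← hαm, mul_inv_cancel, hα1]
  -- "absorption": applying α u to a point in the closure of an S-orbit set
  have habs : ∀ (u : G) (S T : Set G) (y z : X), (∀ s ∈ S, u * s ∈ T) →
      z ∈ closure ((fun g => α g y) '' S) → α u z ∈ closure ((fun g => α g y) '' T) := by
    intro u S T y z hT hz
    have h1 : α u z ∈ (fun w => α u w) '' closure ((fun g => α g y) '' S) :=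
      mem_image_of_mem _ hz
    have h2 := image_closure_subset_closure_image (f := fun w => α u w)
      (s := (fun g => α g y) '' S) (hcg u)
    have h3 : ((fun w => α u w) '' ((fun g => α g y) '' S)) ⊆ (fun g => α g y) '' T := by
      rw [image_image]
      rintro w ⟨s, hs, rfl⟩
      exact ⟨u * s, hT s hs, hαm u s y⟩
    exact closure_mono h3 (h2 h1)
  -- the "flip": if z is in the closure of the V-orbit set of y, then
  -- y is in the closure of the (V⁻¹V)-orbit set of z.  Uses d-openness.
  have hflip : ∀ (Vs Ts : Set G) (y z : X), IsOpen Vs → (1 : G) ∈ Vs →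
      (∀ a ∈ Vs, ∀ b ∈ Vs, a⁻¹ * b ∈ Ts) →
      z ∈ closure ((fun g => α g y) '' Vs) → y ∈ closure ((fun g => α g z) '' Ts) := by
    intro Vs Ts y z hVo hV1 hT hz
    have hD : z ∈ interior (closure ((fun g => α g z) '' Vs)) := hdopen z Vs hVo hV1
    have hmeet := mem_closure_iff.mp hz _ isOpen_interior hD
    obtain ⟨w, hw2, ⟨v, hv, rfl⟩⟩ := hmeet
    have h1 : α v y ∈ closure ((fun g => α g z) '' Vs) := interior_subset hw2
    have h2 := habs v⁻¹ Vs Ts z (α v y) (fun s hs => hT v hv s hs) h1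
    rwa [hid v y] at h2
  -- antitone neighborhood basis at x0
  obtain ⟨B, hB⟩ := (𝓝 x0).exists_antitone_basis
  have hBmem : ∀ n, B n ∈ 𝓝 x0 := fun n => hB.toHasBasis.mem_of_mem trivial
  have hBsep : ∀ w : X, (∀ n, w ∈ closure (B n)) → w = x0 := by
    intro w hw
    by_contra hne'
    have hx0w : x0 ≠ w := fun h => hne' h.symm
    have hws : ({w}ᶜ : Set X) ∈ 𝓝 x0 := compl_singleton_mem_nhds hx0w
    obtain ⟨C, hC, hCc, hCs⟩ := exists_mem_nhds_isClosed_subset hws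
    obtain ⟨n, -, hn⟩ := hB.toHasBasis.mem_iff.mp hC
    have hwC : w ∈ C := (hCc.closure_subset_iff.mpr hn) (hw n)
    exact hCs hwC rfl
  -- pull back the basis to G
  set A : ℕ → Set G := fun n => (fun g => α g x0) ⁻¹' B n with hAdef
  have hA : ∀ n, A n ∈ 𝓝 (1 : G) := by
    intro n
    have hc : ContinuousAt (fun g : G => α g x0) 1 := (hcx x0).continuousAt
    have := hc.preimage_mem_nhds (by rw [hα1]; exact hBmem n)
    exact this
  -- the invariant chain
  choose st h1 h2 h3 h4 h5 using
    fun (V : Set G) (hV : V ∈ 𝓝 (1 : G)) => sin_step_stmt19 hV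
  let C : ℕ → {S : Set G // S ∈ 𝓝 (1 : G)} := fun n =>
    Nat.rec (motive := fun _ => {S : Set G // S ∈ 𝓝 (1 : G)})
      ⟨st (A 0) (hA 0), (h1 _ _).mem_nhds (h2 _ _)⟩
      (fun m ih => ⟨st (ih.1 ∩ A (m + 1)) (inter_mem ih.2 (hA (m + 1))),
        (h1 _ _).mem_nhds (h2 _ _)⟩) n
  set Un : ℕ → Set G := fun n => (C n).1 with hUndef
  have hC0 : Un 0 = st (A 0) (hA 0) := rfl
  have hCs : ∀ n, Un (n + 1) =
      st (Un n ∩ A (n + 1)) (inter_mem (C n).2 (hA (n + 1))) := fun n => rfl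
  have hUo : ∀ n, IsOpen (Un n) := by
    intro n; cases n with
    | zero => rw [hC0]; exact h1 _ _
    | succ m => rw [hCs m]; exact h1 _ _
  have hU1 : ∀ n, (1 : G) ∈ Un n := by
    intro n; cases n with
    | zero => rw [hC0]; exact h2 _ _
    | succ m => rw [hCs m]; exact h2 _ _
  have hUinv : ∀ n, ∀ u ∈ Un n, u⁻¹ ∈ Un n := by
    intro n; cases n with
    | zero => rw [hC0]; exact h3 _ _
    | succ m => rw [hCs m]; exact h3 _ _
  have hUconj : ∀ n, ∀ g : G, ∀ u ∈ Un n, g * u * g⁻¹ ∈ Un n := by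
    intro n; cases n with
    | zero => rw [hC0]; exact h4 _ _
    | succ m => rw [hCs m]; exact h4 _ _
  have htrip : ∀ n, ∀ a ∈ Un (n + 1), ∀ b ∈ Un (n + 1), ∀ c ∈ Un (n + 1),
      a * (b * c) ∈ Un n ∩ A (n + 1) := by
    intro n
    have := h5 (Un n ∩ A (n + 1)) (inter_mem (C n).2 (hA (n + 1)))
    rw [hCs n]; exact this
  have htrip0 : ∀ a ∈ Un 0, ∀ b ∈ Un 0, ∀ c ∈ Un 0, a * (b * c) ∈ A 0 := by
    have := h5 (A 0) (hA 0)
    rw [hC0]; exact this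
  have hUsub : ∀ n, Un (n + 1) ⊆ Un n := by
    intro n a ha
    have := (htrip n a ha 1 (hU1 (n+1)) 1 (hU1 (n+1))).1
    simpa [mul_one] using this
  have hUB : ∀ n, ∀ a ∈ Un n, α a x0 ∈ B n := by
    intro n; cases n with
    | zero =>
      intro a ha
      have := htrip0 a ha 1 (hU1 0) 1 (hU1 0)
      simpa [hAdef, mul_one] using this
    | succ m =>
      intro a ha
      have := (htrip m a ha 1 (hU1 (m+1)) 1 (hU1 (m+1))).2
      simpa [hAdef, mul_one] using this
  have hconj' : ∀ n (g u : G), u ∈ Un n → g⁻¹ * u * g ∈ Un n := by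
    intro n g u hu
    have := hUconj n g⁻¹ u hu
    simpa using this
  -- transporting orbit closures along the transitive action
  have horb : ∀ n (g : G) (z : X),
      z ∈ closure ((fun h => α h (α g x0)) '' Un n) →
      α g⁻¹ z ∈ closure ((fun h => α h x0) '' Un n) := by
    intro n g z hz
    have hsub : (fun h => α h (α g x0)) '' Un n ⊆
        (fun w => α g w) '' ((fun h => α h x0) '' Un n) := by
      rintro w ⟨u, hu, rfl⟩
      refine ⟨α (g⁻¹ * u * g) x0, ⟨g⁻¹ * u * g, hconj' n g u hu, rfl⟩, ?_⟩
      show α g (α (g⁻¹ * u * g) x0) = α u (α g x0)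
      rw [← hαm, ← hαm]
      congr 1
      group
    have h1' : z ∈ closure ((fun w => α g w) '' ((fun h => α h x0) '' Un n)) :=
      closure_mono hsub hz
    have h2' : α g⁻¹ z ∈ closure ((fun w => α g⁻¹ w) ''
        ((fun w => α g w) '' ((fun h => α h x0) '' Un n))) :=
      image_closure_subset_closure_image (hcg g⁻¹) (mem_image_of_mem _ h1')
    refine closure_mono ?_ h2'
    rw [image_image]
    rintro w ⟨s, hs, rfl⟩
    simpa [hid] using hs
  -- separation: common points of all orbit-closures are diagonal
  have hsep : ∀ y z : X, (∀ n, z ∈ closure ((fun g => α g y) '' Un n)) → z = y := by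
    intro y z hz
    obtain ⟨g, hg⟩ := htrans x0 y
    have h1' : ∀ n, α g⁻¹ z ∈ closure ((fun h => α h x0) '' Un n) := by
      intro n
      refine horb n g z ?_
      rw [hg]; exact hz n
    have h2' : ∀ n, α g⁻¹ z ∈ closure (B n) := by
      intro n
      refine closure_mono ?_ (h1' n)
      rintro w ⟨u, hu, rfl⟩
      exact hUB n u hu
    have h3' := hBsep _ h2'
    calc z = α g (α g⁻¹ z) := (hid' g z).symm
    _ = α g x0 := by rw [h3']
    _ = y := hg
  -- the entourages
  set E : ℕ → Set (X × X) := fun n =>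
    {p : X × X | p.2 ∈ closure ((fun g => α g p.1) '' Un n)} with hEdef
  have hEmono : ∀ n, E (n + 1) ⊆ E n := fun n p hp =>
    closure_mono (image_mono (hUsub n)) hp
  have hEnhds : ∀ n (y : X), E n ∈ 𝓝 (y, y) := by
    intro n y
    have hyD : y ∈ interior (closure ((fun g => α g y) '' Un (n + 1))) :=
      hdopen y (Un (n + 1)) (hUo (n+1)) (hU1 (n+1))
    have hDE : interior (closure ((fun g => α g y) '' Un (n + 1))) ×ˢ
        interior (closure ((fun g => α g y) '' Un (n + 1))) ⊆ E n := by
      rintro ⟨y', z⟩ ⟨hy', hz⟩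
      have hy'c : y' ∈ closure ((fun g => α g y) '' Un (n + 1)) := interior_subset hy'
      have hzc : z ∈ closure ((fun g => α g y) '' Un (n + 1)) := interior_subset hz
      have hyT : y ∈ closure ((fun g => α g y') ''
          (image2 (fun a b => a⁻¹ * b) (Un (n + 1)) (Un (n + 1)))) :=
        hflip (Un (n + 1)) _ y y' (hUo (n+1)) (hU1 (n+1))
          (fun a ha b hb => mem_image2_of_mem ha hb) hy'c
      show z ∈ closure ((fun g => α g y') '' Un n)
      have hsub : (fun g => α g y) '' Un (n + 1) ⊆
          closure ((fun g => α g y') '' Un n) := by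
        rintro w ⟨u, hu, rfl⟩
        refine habs u _ (Un n) y' y ?_ hyT
        rintro s ⟨a, ha, b, hb, rfl⟩
        exact (htrip n u hu a⁻¹ (hUinv (n+1) a ha) b hb).1
      have hcc := closure_mono hsub
      rw [closure_closure] at hcc
      exact hcc hzc
    exact mem_of_superset
      ((isOpen_interior.prod isOpen_interior).mem_nhds (mk_mem_prod hyD hyD)) hDE
  have hEcl : ∀ n, closure (E (n + 1)) ⊆ E n := by
    rintro n ⟨y, z⟩ hcl
    show z ∈ closure ((fun g => α g y) '' Un n)
    rw [mem_closure_iff]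
    intro N hNo hzN
    have hyD : y ∈ interior (closure ((fun g => α g y) '' Un (n + 1))) :=
      hdopen y (Un (n + 1)) (hUo (n+1)) (hU1 (n+1))
    have hDN := mem_closure_iff.mp hcl
      (interior (closure ((fun g => α g y) '' Un (n + 1))) ×ˢ N)
      (isOpen_interior.prod hNo) (mk_mem_prod hyD hzN)
    obtain ⟨⟨y', z'⟩, ⟨hy', hz'N⟩, hE'⟩ := hDN
    have hsub : (fun g => α g y') '' Un (n + 1) ⊆
        closure ((fun g => α g y) '' Un n) := by
      rintro w ⟨u, hu, rfl⟩
      refine habs u (Un (n + 1)) (Un n) y y' ?_ (interior_subset hy')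
      intro s hs
      have := (htrip n u hu s hs 1 (hU1 (n+1))).1
      simpa [mul_one] using this
    have hz'c : z' ∈ closure ((fun g => α g y) '' Un n) := by
      have hcc := closure_mono hsub
      rw [closure_closure] at hcc
      exact hcc hE'
    exact mem_closure_iff.mp hz'c N hNo hz'N
  -- work with the neighborhood filter of the diagonal
  have hEU : ∀ n, E n ∈ 𝓝ˢ (diagonal X) := by
    intro n
    rw [mem_nhdsSet_iff_forall]
    intro p hp
    have h := hEnhds n p.1
    convert h using 2
    exact Prod.ext rfl hp.symm
  have hbasisN : (𝓝ˢ (diagonal X)).HasBasis (fun _ : ℕ => True)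
      fun n => closure (E (n + 1)) := by
    rw [Filter.hasBasis_iff]
    intro S
    constructor
    · intro hS
      have hdiagint : diagonal X ⊆ interior S := by
        rw [subset_interior_iff_mem_nhdsSet]
        exact hS
      by_contra hno
      push_neg at hno
      set Cn : ℕ → Set (X × X) := fun n => closure (E (n + 1)) ∩ (interior S)ᶜ with hCndef
      have hCnne : ∀ n, (Cn n).Nonempty := by
        intro n
        rcases (closure (E (n + 1)) ∩ (interior S)ᶜ).eq_empty_or_nonempty with he | hne''
        · exfalso
          have hsub : closure (E (n + 1)) ⊆ interior S := by
            intro p hp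
            by_contra hp'
            exact absurd (Set.eq_empty_iff_forall_notMem.mp he p ⟨hp, hp'⟩) (fun h => h)
          exact (hno n trivial) (hsub.trans interior_subset)
        · exact hne''
      have hCncl : ∀ n, IsClosed (Cn n) := fun n =>
        isClosed_closure.inter (isOpen_interior.isClosed_compl)
      have hCndec : ∀ n, Cn (n + 1) ⊆ Cn n := fun n =>
        inter_subset_inter_left _ (closure_mono (hEmono (n + 1)))
      have hnonempty := IsCompact.nonempty_iInter_of_sequence_nonempty_isCompact_isClosed
        Cn hCndec hCnne ((hCncl 0).isCompact) hCncl
      obtain ⟨⟨y, z⟩, hyz⟩ := hnonempty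
      have hEall : ∀ n, (y, z) ∈ E n := by
        intro n
        have h := (mem_iInter.mp hyz n).1
        exact hEcl n h
      have hzy : z = y := hsep y z (fun n => hEall n)
      have hdiag : (y, z) ∈ diagonal X := hzy.symm
      exact (mem_iInter.mp hyz 0).2 (hdiagint hdiag)
    · rintro ⟨n, -, hsub⟩
      exact mem_of_superset (mem_of_superset (hEU (n + 1)) subset_closure) hsub
  haveI hcgen : IsCountablyGenerated (𝓝ˢ (diagonal X)) := hbasisN.isCountablyGenerated
  letI uX : UniformSpace X := uniformSpaceOfCompactR1
  haveI : IsCountablyGenerated (𝓤 X) := hcgen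
  exact UniformSpace.metrizableSpace
end
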